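/- Let $\Delta$ be the simplicial complex on $\{x_1,\dots,x_n\}\cup\{y_1,\dots,y_m\}$ whose facets are $\bigcup_{k=1}^{s'}\mathcal{F}_k$, where $\mathcal{F}_k$ consists of all subsets with exactly $q(k)$ $x$-vertices and $r(k)$ $y$-vertices, with $q(1)<\dots<q(s')\le n$ and $m\ge r(1)>\dots>r(s')\ge 0$. Then the following are equivalent: (i) $q(i+1)=q(i)+1$ and $r(i+1)=r(i)-1$ for all $i=1,\dots,s'-1$; (ii) $\Delta$ is pure and shellable; (iii) $\Delta$ is strongly connected (in particular pure). -/

import Mathlib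

/-- Number of `x`-vertices of a subset of `{x_1,…,x_n} ∪ {y_1,…,y_m}`. -/
def xcard {n m : ℕ} (F : Finset (Fin n ⊕ Fin m)) : ℕ :=
  (F.filter fun v => v.isLeft).card

/-- Number of `y`-vertices of a subset of `{x_1,…,x_n} ∪ {y_1,…,y_m}`. -/
def ycard {n m : ℕ} (F : Finset (Fin n ⊕ Fin m)) : ℕ :=
  (F.filter fun v => v.isRight).card

/-- The facets of the complex: `⋃_{k=1}^{s'} 𝓕_k`, where `𝓕_k` is the family
of all subsets with exactly `q(k)` `x`-vertices and `r(k)` `y`-vertices. -/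
def famFacets (n m s' : ℕ) (qv rv : ℕ → ℕ) : Set (Finset (Fin n ⊕ Fin m)) :=
  {F | ∃ k, 1 ≤ k ∧ k ≤ s' ∧ xcard F = qv k ∧ ycard F = rv k}

/-- Purity: all facets have the same dimension. -/
def IsPureFam (n m s' : ℕ) (qv rv : ℕ → ℕ) : Prop :=
  ∀ k, 1 ≤ k → k ≤ s' → qv k + rv k = qv 1 + rv 1

/-- Shellability of a set of facets: they can be linearly ordered `F_1,…,F_t`
such that for all `a < b` there exist `v ∈ F_b \ F_a` and `c < b` with
`F_b \ F_c = {v}`. -/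
def Shellable {n m : ℕ} (Fac : Set (Finset (Fin n ⊕ Fin m))) : Prop :=
  ∃ (t : ℕ) (ord : Fin t → Finset (Fin n ⊕ Fin m)),
    Function.Injective ord ∧ (∀ a, ord a ∈ Fac) ∧ (∀ F ∈ Fac, ∃ a, ord a = F) ∧
    ∀ a b : Fin t, a < b →
      ∃ v ∈ ord b \ ord a, ∃ c, c < b ∧ ord b \ ord c = {v}

/-- Strong connectedness of a pure set of facets. -/
def StronglyConnected {n m : ℕ} (Fac : Set (Finset (Fin n ⊕ Fin m))) : Prop :=
  ∀ F ∈ Fac, ∀ G ∈ Fac, ∃ (t : ℕ) (c : ℕ → Finset (Fin n ⊕ Fin m)),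
    c 0 = F ∧ c t = G ∧ (∀ i ≤ t, c i ∈ Fac) ∧
    ∀ i < t, (c i ∩ c (i + 1)).card + 1 = (c i).card

namespace Thm312
open Finset Colex
variable {n m : ℕ}

def gg : (Fin n ⊕ Fin m) → ℕ := Sum.elim (fun i => (i : ℕ)) (fun j => n + (j : ℕ))

lemma gg_inj : Function.Injective (gg (n := n) (m := m)) := by
  rintro (a | a) (b | b) h <;> simp [gg] at h
  · exact congrArg Sum.inl (Fin.ext h)
  · exact absurd h (by have := a.isLt; omega)
  · exact absurd h (by have := b.isLt; omega)
  · exact congrArg Sum.inr (Fin.ext (by omega))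

lemma gg_lt_n_iff (v : Fin n ⊕ Fin m) : gg v < n ↔ v.isLeft := by
  rcases v with a | a <;> simp [gg] <;> omega

lemma xcard_add_ycard (F : Finset (Fin n ⊕ Fin m)) : xcard F + ycard F = F.card := by
  rw [xcard, ycard, ← Finset.card_filter_add_card_filter_not (p := fun v => (v.isLeft : Prop)) (s := F)]
  congr 2
  apply Finset.filter_congr
  rintro (a | a) _ <;> simp

lemma xcard_le_card (F : Finset (Fin n ⊕ Fin m)) : xcard F ≤ F.card :=
  Finset.card_filter_le _ _

lemma xcard_mono {A B : Finset (Fin n ⊕ Fin m)} (h : A ⊆ B) : xcard A ≤ xcard B :=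
  Finset.card_le_card (Finset.filter_subset_filter _ h)

lemma xcard_insert {u : Fin n ⊕ Fin m} {F : Finset (Fin n ⊕ Fin m)} (h : u ∉ F) :
    xcard (insert u F) = xcard F + if u.isLeft then 1 else 0 := by
  rw [xcard, Finset.filter_insert]
  split
  · rw [Finset.card_insert_of_notMem (fun hc => h (Finset.mem_filter.1 hc).1)]
    simp only [xcard, if_pos (by assumption : (u.isLeft : Prop))]
  · simp [xcard, *]

lemma xcard_erase {w : Fin n ⊕ Fin m} {F : Finset (Fin n ⊕ Fin m)} (h : w ∈ F) :
    xcard F = xcard (F.erase w) + if w.isLeft then 1 else 0 := by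
  rw [xcard, xcard, Finset.filter_erase]
  split
  · rw [Finset.card_erase_of_mem (Finset.mem_filter.2 ⟨h, by assumption⟩)]
    have : 1 ≤ (F.filter fun v => (v.isLeft : Prop)).card :=
      Finset.card_pos.2 ⟨w, Finset.mem_filter.2 ⟨h, by assumption⟩⟩
    omega
  · rw [Finset.erase_eq_of_notMem (fun hc => by
      exact absurd (Finset.mem_filter.1 hc).2 (by assumption))]
    omega


/-- existence of a set with given profile -/
lemma exists_profile {q r : ℕ} (hq : q ≤ n) (hr : r ≤ m) :
    ∃ F : Finset (Fin n ⊕ Fin m), xcard F = q ∧ ycard F = r := by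
  classical
  obtain ⟨Fx, -, hFx⟩ := Finset.exists_subset_card_eq (s := (Finset.univ : Finset (Fin n)))
    (by simpa using hq)
  obtain ⟨Fy, -, hFy⟩ := Finset.exists_subset_card_eq (s := (Finset.univ : Finset (Fin m)))
    (by simpa using hr)
  refine ⟨Fx.image Sum.inl ∪ Fy.image Sum.inr, ?_, ?_⟩
  · rw [xcard, Finset.filter_union]
    have h1 : (Fx.image Sum.inl : Finset (Fin n ⊕ Fin m)).filter (fun v => (v.isLeft : Prop))
        = Fx.image Sum.inl := Finset.filter_true_of_mem (by simp)
    have h2 : (Fy.image Sum.inr : Finset (Fin n ⊕ Fin m)).filter (fun v => (v.isLeft : Prop))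
        = ∅ := Finset.filter_false_of_mem (by simp)
    rw [h1, h2, Finset.union_empty, Finset.card_image_of_injective _ Sum.inl_injective, hFx]
  · rw [ycard, Finset.filter_union]
    have h1 : (Fy.image Sum.inr : Finset (Fin n ⊕ Fin m)).filter (fun v => (v.isRight : Prop))
        = Fy.image Sum.inr := Finset.filter_true_of_mem (by simp)
    have h2 : (Fx.image Sum.inl : Finset (Fin n ⊕ Fin m)).filter (fun v => (v.isRight : Prop))
        = ∅ := Finset.filter_false_of_mem (by simp)
    rw [h1, h2, Finset.empty_union, Finset.card_image_of_injective _ Sum.inr_injective, hFy]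

/-- adjacent facets have xcard differing by at most one -/
lemma xcard_step {A B : Finset (Fin n ⊕ Fin m)} (hstep : (A ∩ B).card + 1 = A.card)
    (hcard : A.card = B.card) : xcard B ≤ xcard A + 1 ∧ xcard A ≤ xcard B + 1 := by
  classical
  have key : ∀ S T : Finset (Fin n ⊕ Fin m), xcard S ≤ xcard (T ∩ S) + (S \ T).card := by
    intro S T
    have hsplit : S = (T ∩ S) ∪ (S \ T) := by
      rw [Finset.inter_comm, Finset.union_comm]
      exact (Finset.sdiff_union_inter S T).symm
    calc xcard S = xcard ((T ∩ S) ∪ (S \ T)) := by rw [← hsplit]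
    _ ≤ xcard (T ∩ S) + xcard (S \ T) := by
        rw [xcard, xcard, xcard, Finset.filter_union]
        exact Finset.card_union_le _ _
    _ ≤ xcard (T ∩ S) + (S \ T).card := by
        exact Nat.add_le_add_left (Finset.card_filter_le _ _) _
  have hBA : (B \ A).card = 1 := by
    have := Finset.card_sdiff_add_card_inter B A
    rw [Finset.inter_comm] at this
    omega
  have hAB : (A \ B).card = 1 := by
    have := Finset.card_sdiff_add_card_inter A B
    omega
  constructor
  · have h1 := key B A
    have h2 : xcard (A ∩ B) ≤ xcard A := xcard_mono (Finset.inter_subset_left)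
    omega
  · have h1 := key A B
    have h2 : xcard (B ∩ A) ≤ xcard B := xcard_mono (Finset.inter_subset_left)
    omega

/-- The key exchange lemma for the shelling. -/
lemma exchange {d a0 b0 : ℕ} {A B : Finset (Fin n ⊕ Fin m)}
    (hA : A.card = d ∧ a0 ≤ xcard A ∧ xcard A ≤ b0)
    (hB : B.card = d ∧ a0 ≤ xcard B ∧ xcard B ≤ b0)
    (hlt : toColex (A.image gg) < toColex (B.image gg)) :
    ∃ w ∈ B \ A, ∃ C : Finset (Fin n ⊕ Fin m),
      (C.card = d ∧ a0 ≤ xcard C ∧ xcard C ≤ b0) ∧ B \ C = {w} ∧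
      toColex (C.image gg) < toColex (B.image gg) := by
  classical
  rw [Finset.Colex.toColex_lt_toColex_iff_exists_forall_lt] at hlt
  obtain ⟨x, hxB, hxA, hdom⟩ := hlt
  obtain ⟨w, hwB, hgw⟩ := Finset.mem_image.1 hxB
  have hwA : w ∉ A := fun hc => hxA (Finset.mem_image.2 ⟨w, hc, hgw⟩)
  have hdom' : ∀ z ∈ A, z ∉ B → gg z < gg w := by
    intro z hzA hzB
    have h1 : gg z ∈ A.image gg := Finset.mem_image.2 ⟨z, hzA, rfl⟩
    have h2 : gg z ∉ B.image gg := by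
      intro hc
      obtain ⟨z', hz', hz'e⟩ := Finset.mem_image.1 hc
      exact hzB (gg_inj hz'e ▸ hz')
    have h3 := hdom _ h1 h2
    rwa [← hgw] at h3
  have hABne : (A \ B).Nonempty := by
    rw [Finset.sdiff_nonempty]
    intro hsub
    have : A = B := Finset.eq_of_subset_of_card_le hsub (by omega)
    exact hwA (this ▸ hwB)
  -- pick u in A \ B suitable for the swap
  have main : ∀ u ∈ A \ B, ∀ _ : a0 ≤ xcard (insert u (B.erase w)) ∧
      xcard (insert u (B.erase w)) ≤ b0, _ := fun _ _ _ => trivial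
  -- common construction
  have build : ∀ u ∈ A \ B,
      a0 ≤ xcard (insert u (B.erase w)) → xcard (insert u (B.erase w)) ≤ b0 →
      ∃ w' ∈ B \ A, ∃ C : Finset (Fin n ⊕ Fin m),
      (C.card = d ∧ a0 ≤ xcard C ∧ xcard C ≤ b0) ∧ B \ C = {w'} ∧
      toColex (C.image gg) < toColex (B.image gg) := by
    intro u hu h1 h2
    obtain ⟨huA, huB⟩ := Finset.mem_sdiff.1 hu
    have hguw : gg u < gg w := hdom' u huA huB
    have hne : u ≠ w := fun hc => huB (hc ▸ hwB)
    have huBe : u ∉ B.erase w := fun hc => huB (Finset.mem_of_mem_erase hc)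
    set C := insert u (B.erase w) with hC
    have hcardC : C.card = d := by
      rw [hC, Finset.card_insert_of_notMem huBe, Finset.card_erase_of_mem hwB]
      have : 1 ≤ B.card := Finset.card_pos.2 ⟨w, hwB⟩
      omega
    have hwC : w ∉ C := by
      rw [hC, Finset.mem_insert]
      push_neg
      exact ⟨fun hc => hne hc.symm, Finset.notMem_erase _ _⟩
    have hBC : B \ C = {w} := by
      rw [hC, Finset.sdiff_insert, Finset.sdiff_erase_self hwB,
        Finset.erase_eq_of_notMem (by simp only [Finset.mem_singleton]; exact hne)]
    have hCB : C \ B = {u} := by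
      ext z
      simp only [Finset.mem_sdiff, hC, Finset.mem_insert, Finset.mem_erase,
        Finset.mem_singleton]
      constructor
      · rintro ⟨hz1, hz2⟩
        rcases hz1 with rfl | ⟨-, hzB⟩
        · rfl
        · exact (hz2 hzB).elim
      · rintro rfl
        exact ⟨Or.inl rfl, huB⟩
    refine ⟨w, Finset.mem_sdiff.2 ⟨hwB, hwA⟩, C, ⟨hcardC, h1, h2⟩, hBC, ?_⟩
    rw [Finset.Colex.toColex_lt_toColex]
    constructor
    · intro hc
      have : C = B := Finset.image_injective gg_inj hc
      exact hwC (this ▸ hwB)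
    · intro a haC haB
      obtain ⟨z, hzC, rfl⟩ := Finset.mem_image.1 haC
      have hzB : z ∉ B := fun hc => haB (Finset.mem_image.2 ⟨z, hc, rfl⟩)
      have : z = u := by
        have := Finset.mem_sdiff.2 ⟨hzC, hzB⟩
        rwa [hCB, Finset.mem_singleton] at this
      subst this
      refine ⟨gg w, Finset.mem_image.2 ⟨w, hwB, rfl⟩, ?_, le_of_lt hguw⟩
      intro hc
      obtain ⟨z', hz', hz'e⟩ := Finset.mem_image.1 hc
      exact hwC (gg_inj hz'e ▸ hz')
  by_cases hsame : ∃ u ∈ A \ B, u.isLeft = w.isLeft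
  · obtain ⟨u, hu, hul⟩ := hsame
    obtain ⟨huA, huB⟩ := Finset.mem_sdiff.1 hu
    have huBe : u ∉ B.erase w := fun hc => huB (Finset.mem_of_mem_erase hc)
    have hxC : xcard (insert u (B.erase w)) = xcard B := by
      rw [xcard_insert huBe, hul, ← xcard_erase hwB]
    exact build u hu (hxC ▸ hB.2.1) (hxC ▸ hB.2.2)
  · push_neg at hsame
    obtain ⟨u, hu⟩ := hABne
    obtain ⟨huA, huB⟩ := Finset.mem_sdiff.1 hu
    have huBe : u ∉ B.erase w := fun hc => huB (Finset.mem_of_mem_erase hc)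
    have hguw : gg u < gg w := hdom' u huA huB
    -- w must be a right vertex
    have hwr : w.isLeft = false := by
      by_contra hc
      have hwl : (w.isLeft : Prop) := by
        cases hwl' : w.isLeft
        · exact (hc hwl').elim
        · rfl
      have h1 : gg w < n := (gg_lt_n_iff w).2 hwl
      have h2 : (u.isLeft : Prop) := (gg_lt_n_iff u).1 (lt_trans hguw h1)
      exact hsame u hu (h2.trans hwl.symm)
    -- all of A \ B is left
    have hall : ∀ z ∈ A \ B, (z.isLeft : Prop) := by
      intro z hz
      have := hsame z hz
      rw [hwr] at this
      cases hzl : z.isLeft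
      · exact absurd hzl this
      · rfl
    -- ycard A < ycard B
    have hysub : A.filter (fun v => (v.isRight : Prop)) ⊆ B.filter (fun v => (v.isRight : Prop)) := by
      intro z hz
      obtain ⟨hzA, hzr⟩ := Finset.mem_filter.1 hz
      refine Finset.mem_filter.2 ⟨?_, hzr⟩
      by_contra hzB
      have := hall z (Finset.mem_sdiff.2 ⟨hzA, hzB⟩)
      rcases z with a | a
      · simp at hzr
      · simp at this
    have hwfB : w ∈ B.filter (fun v => (v.isRight : Prop)) := by
      refine Finset.mem_filter.2 ⟨hwB, ?_⟩
      rcases w with a | a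
      · simp at hwr
      · simp
    have hwfA : w ∉ A.filter (fun v => (v.isRight : Prop)) := fun hc =>
      hwA (Finset.mem_filter.1 hc).1
    have hylt : ycard A < ycard B := by
      rw [ycard, ycard]
      exact Finset.card_lt_card (Finset.ssubset_iff_of_subset hysub |>.2 ⟨w, hwfB, hwfA⟩)
    have hxlt : xcard B < xcard A := by
      have h1 := xcard_add_ycard A
      have h2 := xcard_add_ycard B
      omega
    have hul : (u.isLeft : Prop) := hall u hu
    have hxC : xcard (insert u (B.erase w)) = xcard B + 1 := by
      have h3 : xcard B = xcard (B.erase w) := by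
        have h4 := xcard_erase hwB
        rwa [hwr, if_neg (by simp), Nat.add_zero] at h4
      rw [xcard_insert huBe, if_pos hul, ← h3]
    exact build u hu (by omega) (by omega)


def IsChain' (Fac : Set (Finset (Fin n ⊕ Fin m))) (F G : Finset (Fin n ⊕ Fin m)) : Prop :=
  ∃ (t : ℕ) (c : ℕ → Finset (Fin n ⊕ Fin m)),
    c 0 = F ∧ c t = G ∧ (∀ i ≤ t, c i ∈ Fac) ∧
    ∀ i < t, (c i ∩ c (i + 1)).card + 1 = (c i).card

lemma chain_refl {Fac : Set (Finset (Fin n ⊕ Fin m))} {F : Finset (Fin n ⊕ Fin m)}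
    (hF : F ∈ Fac) : IsChain' Fac F F :=
  ⟨0, fun _ => F, rfl, rfl, fun _ _ => hF, fun i hi => absurd hi (Nat.not_lt_zero i)⟩

lemma chain_symm {Fac : Set (Finset (Fin n ⊕ Fin m))} {d : ℕ}
    (hcard : ∀ F ∈ Fac, F.card = d) {F G : Finset (Fin n ⊕ Fin m)}
    (h : IsChain' Fac F G) : IsChain' Fac G F := by
  obtain ⟨t, c, h0, ht, hmem, hstep⟩ := h
  refine ⟨t, fun i => c (t - i), by simp [ht], by simp [h0], fun i hi => hmem _ (by omega), ?_⟩
  intro i hi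
  have hs := hstep (t - (i + 1)) (by omega)
  have e1 : t - (i + 1) + 1 = t - i := by omega
  rw [e1] at hs
  show (c (t - i) ∩ c (t - (i + 1))).card + 1 = (c (t - i)).card
  rw [Finset.inter_comm]
  have hc1 := hcard _ (hmem (t - (i + 1)) (by omega))
  have hc2 := hcard _ (hmem (t - i) (by omega))
  omega

lemma chain_snoc {Fac : Set (Finset (Fin n ⊕ Fin m))} {F G H : Finset (Fin n ⊕ Fin m)}
    (h : IsChain' Fac F G) (hH : H ∈ Fac) (hGH : (G ∩ H).card + 1 = G.card) :
    IsChain' Fac F H := by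
  obtain ⟨t, c, h0, ht, hmem, hstep⟩ := h
  refine ⟨t + 1, fun i => if i ≤ t then c i else H, by simp [h0], by simp, ?_, ?_⟩
  · intro i hi
    by_cases h' : i ≤ t
    · simpa [h'] using hmem i h'
    · simpa [h'] using hH
  · intro i hi
    by_cases h' : i < t
    · have h1 : i ≤ t := by omega
      have h2 : i + 1 ≤ t := by omega
      simpa [h1, h2] using hstep i h'
    · have h1 : i = t := by omega
      subst h1
      simp [ht, hGH]

lemma connected_of_shellable {Fac : Set (Finset (Fin n ⊕ Fin m))} {d : ℕ}
    (hcard : ∀ F ∈ Fac, F.card = d) (hs : Shellable Fac) : StronglyConnected Fac := by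
  obtain ⟨t, ord, hinj, hmem, hsurj, hshell⟩ := hs
  have key : ∀ N : ℕ, ∀ b : Fin t, b.val < N → ∀ a : Fin t, a < b →
      IsChain' Fac (ord a) (ord b) := by
    intro N
    induction N with
    | zero => intro b hb; omega
    | succ N ih =>
      intro b hb a hab
      obtain ⟨v, hv, c, hcb, hdiff⟩ := hshell a b hab
      have hvb : v ∈ ord b := (Finset.mem_sdiff.1 hv).1
      have hint : (ord b ∩ ord c).card + 1 = (ord b).card := by
        have h1 := Finset.card_sdiff_add_card_inter (ord b) (ord c)
        rw [hdiff, Finset.card_singleton] at h1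
        omega
      have hcb' : (ord c ∩ ord b).card + 1 = (ord c).card := by
        rw [Finset.inter_comm, hcard _ (hmem c)]
        rw [hcard _ (hmem b)] at hint
        omega
      rcases eq_or_ne c a with rfl | hca
      · exact chain_snoc (chain_refl (hmem c)) (hmem b) hcb'
      · rcases lt_or_gt_of_ne hca with h' | h'
        · -- c < a, chain from ord c to ord a, reverse, then snoc
          have h1 : IsChain' Fac (ord c) (ord a) := ih a (by omega) c h'
          exact chain_snoc (chain_symm hcard h1) (hmem b) hcb'
        · -- a < c
          have h1 : IsChain' Fac (ord a) (ord c) := ih c (by omega) a h'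
          exact chain_snoc h1 (hmem b) hcb'
  intro F hF G hG
  obtain ⟨a, ha⟩ := hsurj F hF
  obtain ⟨b, hb⟩ := hsurj G hG
  rcases lt_trichotomy a b with h' | h' | h'
  · have h2 := key (b.val + 1) b (by omega) a h'
    rw [ha, hb] at h2
    exact h2
  · have hFG : F = G := by rw [← ha, ← hb, h']
    subst hFG
    exact chain_refl hF
  · have h2 := chain_symm hcard (key (a.val + 1) a (by omega) b h')
    rw [ha, hb] at h2
    exact h2

/-- consequences of condition (i) -/
lemma qr_form {s' : ℕ} {qv rv : ℕ → ℕ}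
    (hi : ∀ i, 1 ≤ i → i < s' → qv (i + 1) = qv i + 1 ∧ rv i = rv (i + 1) + 1) :
    ∀ j, j + 1 ≤ s' → qv (j + 1) = qv 1 + j ∧ rv (j + 1) + j = rv 1 := by
  intro j
  induction j with
  | zero => intro _; simp
  | succ j ih =>
    intro hj
    have h1 := ih (by omega)
    have h2 := hi (j + 1) (by omega) (by omega)
    omega

lemma pure_of_i {s' : ℕ} {qv rv : ℕ → ℕ} (n m : ℕ)
    (hi : ∀ i, 1 ≤ i → i < s' → qv (i + 1) = qv i + 1 ∧ rv i = rv (i + 1) + 1) :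
    IsPureFam n m s' qv rv := by
  intro k hk1 hks
  obtain ⟨h1, h2⟩ := qr_form hi (k - 1) (by omega)
  have hk : k - 1 + 1 = k := by omega
  rw [hk] at h1 h2
  omega

/-- characterization of facets under condition (i) -/
lemma memFac_iff {s' : ℕ} {qv rv : ℕ → ℕ} (hs' : 1 ≤ s')
    (hi : ∀ i, 1 ≤ i → i < s' → qv (i + 1) = qv i + 1 ∧ rv i = rv (i + 1) + 1)
    (F : Finset (Fin n ⊕ Fin m)) :
    F ∈ famFacets n m s' qv rv ↔
      F.card = qv 1 + rv 1 ∧ qv 1 ≤ xcard F ∧ xcard F ≤ qv 1 + (s' - 1) := by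
  constructor
  · rintro ⟨k, hk1, hks, hx, hy⟩
    obtain ⟨h1, h2⟩ := qr_form hi (k - 1) (by omega)
    have hk : k - 1 + 1 = k := by omega
    rw [hk] at h1 h2
    have h3 := xcard_add_ycard F
    omega
  · rintro ⟨hcard, hlo, hhi⟩
    refine ⟨xcard F - qv 1 + 1, by omega, by omega, ?_, ?_⟩
    · obtain ⟨h1, h2⟩ := qr_form hi (xcard F - qv 1) (by omega)
      omega
    · obtain ⟨h1, h2⟩ := qr_form hi (xcard F - qv 1) (by omega)
      have h3 := xcard_add_ycard F
      omega

/-- strongly connected (plus pure) implies condition (i) -/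
lemma i_of_connected {s' : ℕ} (hs' : 1 ≤ s') {qv rv : ℕ → ℕ}
    (hq : ∀ i j, 1 ≤ i → i < j → j ≤ s' → qv i < qv j)
    (hr : ∀ i j, 1 ≤ i → i < j → j ≤ s' → rv j < rv i)
    (hqn : qv s' ≤ n) (hrm : rv 1 ≤ m)
    (hpure : IsPureFam n m s' qv rv)
    (hconn : StronglyConnected (famFacets n m s' qv rv)) :
    ∀ i, 1 ≤ i → i < s' → qv (i + 1) = qv i + 1 ∧ rv i = rv (i + 1) + 1 := by
  intro i h1 his
  have hqi : qv i < qv (i + 1) := hq i (i + 1) h1 (by omega) (by omega)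
  have hpi := hpure i h1 (by omega)
  have hpi1 := hpure (i + 1) (by omega) (by omega)
  suffices h : qv (i + 1) ≤ qv i + 1 by omega
  by_contra hgap
  push_neg at hgap
  -- construct F and G
  have hqile : qv i ≤ n := by
    rcases eq_or_lt_of_le (le_of_lt his) with h' | h'
    · omega
    · have := hq i s' h1 his (le_refl _); omega
  have hrile : rv i ≤ m := by
    rcases Nat.lt_or_ge 1 i with h' | h'
    · have := hr 1 i (le_refl _) h' (by omega); omega
    · have : i = 1 := by omega
      rw [this]; exact hrm
  have hqi1le : qv (i + 1) ≤ n := by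
    rcases eq_or_lt_of_le (Nat.succ_le_of_lt his) with h' | h'
    · have h'' : i + 1 = s' := h'
      rw [h'']; exact hqn
    · have := hq (i + 1) s' (by omega) h' (le_refl _); omega
  have hri1le : rv (i + 1) ≤ m := by
    have := hr 1 (i + 1) (le_refl _) (by omega) (by omega)
    rcases Nat.lt_or_ge 1 i with h' | h'
    · omega
    · omega
  obtain ⟨F, hFx, hFy⟩ := exists_profile hqile hrile
  obtain ⟨G, hGx, hGy⟩ := exists_profile hqi1le hri1le
  have hF : F ∈ famFacets n m s' qv rv := ⟨i, h1, by omega, hFx, hFy⟩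
  have hG : G ∈ famFacets n m s' qv rv := ⟨i + 1, by omega, by omega, hGx, hGy⟩
  obtain ⟨t, c, hc0, hct, hcmem, hcstep⟩ := hconn F hF G hG
  classical
  have hcard : ∀ j ≤ t, (c j).card = qv 1 + rv 1 := by
    intro j hj
    obtain ⟨k, hk1, hks, hx, hy⟩ := hcmem j hj
    have := xcard_add_ycard (c j)
    have := hpure k hk1 hks
    omega
  -- x-cards change by at most 1 along the chain
  have hstep' : ∀ j < t, xcard (c (j + 1)) ≤ xcard (c j) + 1 := by
    intro j hj
    exact (xcard_step (hcstep j hj) (by rw [hcard j (by omega), hcard (j+1) (by omega)])).1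
  -- find the crossing
  have hPt : ¬ (xcard (c t) ≤ qv i) := by rw [hct, hGx]; omega
  have hP0 : xcard (c 0) ≤ qv i := by rw [hc0, hFx]
  let j0 := Nat.find (⟨t, hPt⟩ : ∃ j, ¬ (xcard (c j) ≤ qv i))
  have hj0 : ¬ (xcard (c j0) ≤ qv i) := Nat.find_spec (⟨t, hPt⟩ : ∃ j, ¬ (xcard (c j) ≤ qv i))
  have hj0pos : j0 ≠ 0 := fun hc => hj0 (hc ▸ hP0)
  have hj0le : j0 ≤ t := Nat.find_le hPt
  have hprev : xcard (c (j0 - 1)) ≤ qv i := by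
    by_contra hc
    have h5 : j0 ≤ j0 - 1 := Nat.find_le hc
    omega
  have hj0eq : j0 - 1 + 1 = j0 := by omega
  have hstep'' := hstep' (j0 - 1) (by omega)
  rw [hj0eq] at hstep''
  have hxj0 : xcard (c j0) = qv i + 1 := by omega
  obtain ⟨k, hk1, hks, hx, hy⟩ := hcmem j0 hj0le
  -- qv k = qv i + 1 : impossible
  rcases Nat.lt_or_ge k (i + 1) with h' | h'
  · rcases eq_or_lt_of_le (Nat.lt_succ_iff.1 h') with h'' | h''
    · rw [h''] at hx; omega
    · have := hq k i hk1 h'' (by omega); omega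
  · rcases eq_or_lt_of_le h' with h'' | h''
    · rw [← h''] at hx; omega
    · have := hq (i + 1) k (by omega) h'' hks; omega
lemma shellable_of_i {s' : ℕ} (hs' : 1 ≤ s') {qv rv : ℕ → ℕ}
    (hi : ∀ i, 1 ≤ i → i < s' → qv (i + 1) = qv i + 1 ∧ rv i = rv (i + 1) + 1) :
    Shellable (famFacets n m s' qv rv) := by
  classical
  set Fac := famFacets n m s' qv rv with hFac
  have hfin : Fac.Finite := Set.toFinite _
  set S : Finset (Finset (Fin n ⊕ Fin m)) := hfin.toFinset with hS
  have hmemS : ∀ F, F ∈ S ↔ F ∈ Fac := fun F => hfin.mem_toFinset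
  set keyf : Finset (Fin n ⊕ Fin m) → Colex (Finset ℕ) :=
    fun A => toColex (A.image gg) with hkeyf
  have keyinj : Function.Injective keyf := by
    intro A B h
    rw [hkeyf] at h
    have h2 : A.image gg = B.image gg := congrArg ofColex h
    exact Finset.image_injective gg_inj h2
  set SK : Finset (Colex (Finset ℕ)) := S.image keyf with hSK
  have hinv : ∀ x ∈ SK, ∃ A, A ∈ S ∧ keyf A = x := by
    intro x hx
    obtain ⟨A, hA, hAx⟩ := Finset.mem_image.1 hx
    exact ⟨A, hA, hAx⟩
  choose f hf1 hf2 using hinv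
  set t := SK.card with ht
  let e := SK.orderIsoOfFin rfl
  set ord : Fin t → Finset (Fin n ⊕ Fin m) := fun i => f (e i).val (e i).property with hord
  have hkey_ord : ∀ i, keyf (ord i) = (e i).val := fun i => hf2 _ _
  have hord_memS : ∀ i, ord i ∈ S := fun i => hf1 _ _
  have hord_inj : Function.Injective ord := by
    intro i j h
    have : (e i).val = (e j).val := by rw [← hkey_ord, ← hkey_ord, h]
    exact e.injective (Subtype.ext this)
  have hord_lt : ∀ i j : Fin t, i < j → keyf (ord i) < keyf (ord j) := by
    intro i j hij
    rw [hkey_ord, hkey_ord]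
    exact e.strictMono hij
  refine ⟨t, ord, hord_inj, fun i => (hmemS _).1 (hord_memS i), ?_, ?_⟩
  · intro F hF
    have hFk : keyf F ∈ SK := Finset.mem_image.2 ⟨F, (hmemS F).2 hF, rfl⟩
    refine ⟨e.symm ⟨keyf F, hFk⟩, ?_⟩
    apply keyinj
    rw [hkey_ord]
    have : e (e.symm ⟨keyf F, hFk⟩) = ⟨keyf F, hFk⟩ := e.apply_symm_apply _
    rw [this]
  · intro a b hab
    have hAB : keyf (ord a) < keyf (ord b) := hord_lt a b hab
    have hAF : ord a ∈ Fac := (hmemS _).1 (hord_memS a)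
    have hBF : ord b ∈ Fac := (hmemS _).1 (hord_memS b)
    rw [hFac, memFac_iff hs' hi] at hAF hBF
    obtain ⟨w, hw, C, hCprof, hBC, hClt⟩ := exchange hAF hBF hAB
    have hCF : C ∈ Fac := by rw [hFac, memFac_iff hs' hi]; exact hCprof
    have hCk : keyf C ∈ SK := Finset.mem_image.2 ⟨C, (hmemS C).2 hCF, rfl⟩
    set c := e.symm ⟨keyf C, hCk⟩ with hc
    have hordc : ord c = C := by
      apply keyinj
      rw [hkey_ord, hc, e.apply_symm_apply]
    refine ⟨w, hw, c, ?_, by rw [hordc]; exact hBC⟩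
    -- c < b
    have h1 : (⟨keyf C, hCk⟩ : {x // x ∈ SK}) < e b := by
      rw [Subtype.mk_lt_mk]
      · exact lt_of_lt_of_eq hClt (hkey_ord b)
    have h2 : e.symm ⟨keyf C, hCk⟩ < e.symm (e b) := e.symm.strictMono h1
    rwa [e.symm_apply_apply] at h2
end Thm312

/-- (Theorem 3.12.)  For the complex with facets `⋃_{k=1}^{s'} 𝓕_k` the
following are equivalent: (i) `q(i+1) = q(i) + 1` and `r(i+1) = r(i) - 1`
for all `i`; (ii) the complex is pure and shellable; (iii) the complex is
pure and strongly connected. -/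
theorem pure_shellable_iff (n m s' : ℕ) (hs' : 1 ≤ s') (qv rv : ℕ → ℕ)
    (hq : ∀ i j, 1 ≤ i → i < j → j ≤ s' → qv i < qv j)
    (hr : ∀ i j, 1 ≤ i → i < j → j ≤ s' → rv j < rv i)
    (hqn : qv s' ≤ n) (hrm : rv 1 ≤ m) :
    ((∀ i, 1 ≤ i → i < s' → qv (i + 1) = qv i + 1 ∧ rv i = rv (i + 1) + 1) ↔
      (IsPureFam n m s' qv rv ∧ Shellable (famFacets n m s' qv rv))) ∧
    ((IsPureFam n m s' qv rv ∧ Shellable (famFacets n m s' qv rv)) ↔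
      (IsPureFam n m s' qv rv ∧ StronglyConnected (famFacets n m s' qv rv))) := by
  have hcard_of_pure : IsPureFam n m s' qv rv →
      ∀ F ∈ famFacets n m s' qv rv, F.card = qv 1 + rv 1 := by
    intro hp F hF
    obtain ⟨k, hk1, hks, hx, hy⟩ := hF
    have h1 := Thm312.xcard_add_ycard F
    have h2 := hp k hk1 hks
    omega
  constructor
  · constructor
    · intro hi
      exact ⟨Thm312.pure_of_i n m hi, Thm312.shellable_of_i hs' hi⟩
    · rintro ⟨hp, hsh⟩
      exact Thm312.i_of_connected hs' hq hr hqn hrm hp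
        (Thm312.connected_of_shellable (hcard_of_pure hp) hsh)
  · constructor
    · rintro ⟨hp, hsh⟩
      exact ⟨hp, Thm312.connected_of_shellable (hcard_of_pure hp) hsh⟩
    · rintro ⟨hp, hco⟩
      exact ⟨hp, Thm312.shellable_of_i hs'
        (Thm312.i_of_connected hs' hq hr hqn hrm hp hco)⟩
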